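/- arXiv:1110.5432 — 2 statements merged into one kernel-verified Lean document; each statement's English description precedes it below -/
import Mathlib

section
/- Suppose 0 < ν ≤ 1/4 and 0 < z ≤ ν². Then the roots w_± = z − 1/2 ± (1/2)√(1 − 8z − 4ν²) are real and satisfy −1 ≤ w₋ ≤ −3/8 and −6ν² ≤ w₊ ≤ −ν². -/
/-- For `0 < ν ≤ 1/4` and `0 < z ≤ ν²`, the roots
`w_± = z − 1/2 ± (1/2)√(1 − 8z − 4ν²)` satisfy
`−1 ≤ w₋ ≤ −3/8` and `−6ν² ≤ w₊ ≤ −ν²`. -/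
theorem roots_bound_small_z (ν z : ℝ) (hν : 0 < ν) (hν' : ν ≤ 1 / 4)
    (hz : 0 < z) (hz' : z ≤ ν ^ 2) :
    (-1 ≤ z - 1 / 2 - (1 / 2) * Real.sqrt (1 - 8 * z - 4 * ν ^ 2) ∧
      z - 1 / 2 - (1 / 2) * Real.sqrt (1 - 8 * z - 4 * ν ^ 2) ≤ -(3 / 8)) ∧
    (-(6 * ν ^ 2) ≤ z - 1 / 2 + (1 / 2) * Real.sqrt (1 - 8 * z - 4 * ν ^ 2) ∧
      z - 1 / 2 + (1 / 2) * Real.sqrt (1 - 8 * z - 4 * ν ^ 2) ≤ -(ν ^ 2)) := by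
  have hν2 : ν ^ 2 ≤ 1 / 16 := by nlinarith
  have hD : (0:ℝ) ≤ 1 - 8 * z - 4 * ν ^ 2 := by nlinarith
  set s := Real.sqrt (1 - 8 * z - 4 * ν ^ 2) with hs
  have hs0 : 0 ≤ s := Real.sqrt_nonneg _
  have hs2 : s ^ 2 = 1 - 8 * z - 4 * ν ^ 2 := Real.sq_sqrt hD
  have hsle1 : s ≤ 1 := by nlinarith [sq_nonneg (s - 1)]
  have h2 : 2 * z + 1 / 4 ≤ s := by nlinarith [sq_nonneg (s - (2 * z + 1 / 4)), sq_nonneg ν]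
  have h3 : s ≤ 1 - 2 * z - 2 * ν ^ 2 := by
    nlinarith [sq_nonneg (s - (1 - 2 * z - 2 * ν ^ 2)), sq_nonneg ν, sq_nonneg z]
  have h4 : 1 - 2 * z - 12 * ν ^ 2 ≤ s := by
    rcases le_or_gt (1 - 2 * z - 12 * ν ^ 2) 0 with h | h
    · linarith
    · nlinarith [sq_nonneg (s - (1 - 2 * z - 12 * ν ^ 2)), sq_nonneg ν]
  refine ⟨⟨by linarith, by linarith⟩, ⟨by linarith, by linarith⟩⟩
end

section
/- There exist constants C > 0 and c₀ > 0 such that for every integer k' ≥ 0, ∫₀^π p·e^{−c₀ p k'}·(1 + ln(1/p)) dp ≤ C (1+k')^{−2} (1 + ln(1+k')). -/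
open Real

/-- `x e^{-x} ≤ 1` for `x ≥ 0`. -/
lemma aux_mul_exp_neg_le_one {x : ℝ} (_hx : 0 ≤ x) : x * Real.exp (-x) ≤ 1 := by
  have h : x ≤ Real.exp x := by linarith [Real.add_one_le_exp x]
  calc x * Real.exp (-x) ≤ Real.exp x * Real.exp (-x) :=
        mul_le_mul_of_nonneg_right h (Real.exp_nonneg _)
    _ = 1 := by rw [← Real.exp_add]; simp

/-- `∫₀^π e^{-ap} dp ≤ 1/a` for `a > 0`. -/
lemma aux_exp_int_le (a : ℝ) (ha : 0 < a) :
    ∫ p in (0:ℝ)..π, Real.exp (-(a * p)) ≤ 1 / a := by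
  have h1 : (fun p : ℝ => Real.exp (-(a * p))) = fun p => Real.exp ((-a) * p) := by
    ext p; ring_nf
  have hc : (-a) ≠ 0 := by linarith
  have h2 : ∫ p in (0:ℝ)..π, Real.exp ((-a) * p)
      = (-a)⁻¹ • ∫ x in ((-a) * 0)..((-a) * π), Real.exp x := by
    exact intervalIntegral.integral_comp_mul_left Real.exp hc
  rw [h1, h2]
  rw [integral_exp]
  have hπ : 0 < Real.exp (-a * π) := Real.exp_pos _
  have : (-a)⁻¹ • (Real.exp (-a * π) - Real.exp (-a * 0)) =
      (1 - Real.exp (-a * π)) / a := by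
    rw [smul_eq_mul]
    field_simp
    ring_nf
    rw [Real.exp_zero]; ring
  rw [this]
  gcongr
  linarith

/-- There are constants `C, c₀ > 0` such that for every integer `k' ≥ 0`,
`∫₀^π p e^{−c₀ p k'}(1 + ln(1/p)) dp ≤ C (1+k')⁻² (1 + ln(1+k'))`. -/
theorem kernel_decay_estimate :
    ∃ C > (0 : ℝ), ∃ c₀ > (0 : ℝ), ∀ k' : ℕ,
      ∫ p in (0:ℝ)..π, p * Real.exp (-c₀ * p * k') * (1 + Real.log (1 / p))
        ≤ C / (1 + (k' : ℝ)) ^ 2 * (1 + Real.log (1 + (k' : ℝ))) := by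
  refine ⟨5 * Real.exp π, by positivity, 1, one_pos, fun k' => ?_⟩
  set K : ℝ := 1 + (k' : ℝ) with hK
  have hK1 : 1 ≤ K := by
    have : (0:ℝ) ≤ (k' : ℝ) := Nat.cast_nonneg _
    simp only [hK]; linarith
  have hKpos : 0 < K := by linarith
  set L : ℝ := Real.log K with hLdef
  have hL0 : 0 ≤ L := Real.log_nonneg hK1
  set A : ℝ := (1 + L) * Real.exp π * (2 / K) with hA
  set B : ℝ := Real.exp π / K with hB
  have hA0 : 0 ≤ A := by rw [hA]; positivity
  have hB0 : 0 ≤ B := by rw [hB]; positivity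
  -- pointwise bound on [0, π]
  have key : ∀ p ∈ Set.Icc (0:ℝ) π,
      p * Real.exp (-1 * p * k') * (1 + Real.log (1/p))
        ≤ A * Real.exp (-(K/2 * p)) + B * Real.exp (-(K * p)) := by
    intro p hp
    obtain ⟨hp0, hpπ⟩ := hp
    rcases hp0.eq_or_lt with h0 | h0
    · rw [← h0]
      simp only [zero_mul]
      positivity
    · set E : ℝ := Real.exp (-1 * p * k') with hE
      have hEpos : 0 < E := Real.exp_pos _
      have hk : (k' : ℝ) = K - 1 := by rw [hK]; ring
      have hexp : E ≤ Real.exp π * Real.exp (-(K * p)) := by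
        rw [hE, ← Real.exp_add]
        apply Real.exp_le_exp.mpr
        rw [hk]; nlinarith
      have hlog : 1 + Real.log (1/p) ≤ 1 + L + 1/(p*K) := by
        have heq : (1:ℝ)/p = K * (1/(p*K)) := by field_simp
        have hpK : (0:ℝ) < 1/(p*K) := by positivity
        rw [heq, Real.log_mul hKpos.ne' hpK.ne']
        have h2 : Real.log (1/(p*K)) ≤ 1/(p*K) - 1 := Real.log_le_sub_one_of_pos hpK
        rw [hLdef]
        linarith
      have step1 : p * E * (1 + Real.log (1/p)) ≤ p * E * (1 + L + 1/(p*K)) :=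
        mul_le_mul_of_nonneg_left hlog (by positivity)
      have expand : p * E * (1 + L + 1/(p*K)) = p * E * (1 + L) + E / K := by
        field_simp
      set e1 : ℝ := Real.exp (-(K/2 * p)) with he1
      set e2 : ℝ := Real.exp (-(K * p)) with he2
      have he1pos : 0 < e1 := Real.exp_pos _
      have he2pos : 0 < e2 := Real.exp_pos _
      have hq : (K/2 * p) * Real.exp (-(K/2 * p)) ≤ 1 :=
        aux_mul_exp_neg_le_one (by positivity)
      have hpe1 : p * e1 ≤ 2/K := by
        have hc : p * e1 = (2/K) * ((K/2 * p) * e1) := by field_simp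
        rw [hc]
        calc (2/K) * ((K/2 * p) * e1) ≤ (2/K) * 1 :=
              mul_le_mul_of_nonneg_left hq (by positivity)
          _ = 2/K := mul_one _
      have he12 : e2 = e1 * e1 := by
        rw [he1, he2, ← Real.exp_add]; congr 1; ring
      have hpe : p * e2 ≤ (2/K) * e1 := by
        calc p * e2 = (p * e1) * e1 := by rw [he12]; ring
          _ ≤ (2/K) * e1 := mul_le_mul_of_nonneg_right hpe1 he1pos.le
      have t1 : p * E * (1 + L) ≤ A * e1 := by
        have h1 : p * E ≤ p * (Real.exp π * e2) :=
          mul_le_mul_of_nonneg_left hexp h0.le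
        have h2 : p * E * (1 + L) ≤ (1 + L) * Real.exp π * (p * e2) := by
          nlinarith [mul_le_mul_of_nonneg_right h1 (by positivity : (0:ℝ) ≤ 1 + L)]
        have h3 : (1 + L) * Real.exp π * (p * e2) ≤ (1 + L) * Real.exp π * ((2/K) * e1) :=
          mul_le_mul_of_nonneg_left hpe (by positivity)
        have h4 : (1 + L) * Real.exp π * ((2/K) * e1) = A * e1 := by rw [hA]; ring
        linarith
      have t2 : E / K ≤ B * e2 := by
        rw [hB]
        have : E / K ≤ (Real.exp π * e2) / K := by
          gcongr
        calc E / K ≤ (Real.exp π * e2) / K := this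
          _ = Real.exp π / K * e2 := by ring
      linarith
  -- integrability of the integrand
  have hfint : IntervalIntegrable
      (fun p => p * Real.exp (-1 * p * k') * (1 + Real.log (1/p)))
      MeasureTheory.volume 0 π := by
    have heq : (fun p : ℝ => p * Real.exp (-1 * p * k') * (1 + Real.log (1/p)))
        = fun p => p * Real.exp (-1 * p * k')
            - Real.exp (-1 * p * k') * (p * Real.log p) := by
      ext p
      rw [one_div, Real.log_inv]
      ring
    rw [heq]
    apply IntervalIntegrable.sub
    · exact Continuous.intervalIntegrable (by fun_prop) _ _
    · exact Continuous.intervalIntegrable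
        ((by fun_prop : Continuous fun p : ℝ => Real.exp (-1 * p * k')).mul
          Real.continuous_mul_log) _ _
  have hgint : IntervalIntegrable
      (fun p => A * Real.exp (-(K/2 * p)) + B * Real.exp (-(K * p)))
      MeasureTheory.volume 0 π :=
    Continuous.intervalIntegrable (by fun_prop) _ _
  have hmono := intervalIntegral.integral_mono_on Real.pi_pos.le hfint hgint key
  -- compute/bound the integral of the majorant
  have hsplit : (∫ p in (0:ℝ)..π,
        (A * Real.exp (-(K/2 * p)) + B * Real.exp (-(K * p))))
      = A * (∫ p in (0:ℝ)..π, Real.exp (-(K/2 * p)))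
        + B * (∫ p in (0:ℝ)..π, Real.exp (-(K * p))) := by
    rw [intervalIntegral.integral_add
        (Continuous.intervalIntegrable (by fun_prop) _ _)
        (Continuous.intervalIntegrable (by fun_prop) _ _),
      intervalIntegral.integral_const_mul, intervalIntegral.integral_const_mul]
  have hI1 : (∫ p in (0:ℝ)..π, Real.exp (-(K/2 * p))) ≤ 1 / (K/2) :=
    aux_exp_int_le (K/2) (by positivity)
  have hI2 : (∫ p in (0:ℝ)..π, Real.exp (-(K * p))) ≤ 1 / K :=
    aux_exp_int_le K hKpos
  have hgle : (∫ p in (0:ℝ)..π,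
        (A * Real.exp (-(K/2 * p)) + B * Real.exp (-(K * p))))
      ≤ A * (1 / (K/2)) + B * (1 / K) := by
    rw [hsplit]
    have := mul_le_mul_of_nonneg_left hI1 hA0
    have := mul_le_mul_of_nonneg_left hI2 hB0
    linarith
  have hfinal : A * (1 / (K/2)) + B * (1 / K) ≤ 5 * Real.exp π / K ^ 2 * (1 + L) := by
    have h1 : A * (1 / (K/2)) + B * (1 / K)
        = Real.exp π / K ^ 2 * (4 * (1 + L) + 1) := by
      rw [hA, hB]; field_simp; ring
    have h2 : 5 * Real.exp π / K ^ 2 * (1 + L)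
        = Real.exp π / K ^ 2 * (5 * (1 + L)) := by ring
    rw [h1, h2]
    apply mul_le_mul_of_nonneg_left (by linarith) (by positivity)
  linarith
end
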